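/- Let $d \ge 2$ and consider the $4\times 4$ matrix $A$ over $k[s,t]$ given by rows $(d(d-1)t^{d-1}, -d(d-1)st^{d-2}, 0, 0)$, $(0, -dt^{d-1}, ds^{d-1}, 0)$, $(0, dt^{d-1}, -ds^{d-1}, 0)$, $(0, 0, -d(d-1)s^{d-2}t, d(d-1)s^{d-1})$. If $(f_0,f_1,f_2,f_3)$ are homogeneous polynomials of degree $e$ with $A\,(f_0,f_1,f_2,f_3)^T = 0$, then $s^{d+1}$ divides $f_0$, and $f_0$ determines $f_1, f_2, f_3$ uniquely; the solution space has dimension $e - d$ over $k$ (i.e., $f_0$ ranges over $s^{d+1}$ times an arbitrary homogeneous polynomial of degree $e-d-1$). -/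

import Mathlib

open MvPolynomial

/-- The `4×4` matrix of conditions from the proof of Theorem 5.1 for a pair of
degree-`d` relations satisfying the parameterized tangency condition. -/
noncomputable def tangencyMatrix (K : Type*) [Field K] (d : ℕ) :
    Matrix (Fin 4) (Fin 4) (MvPolynomial (Fin 2) K) :=
  !![C ((d : K) * ((d : K) - 1)) * X 1 ^ (d - 1),
      -(C ((d : K) * ((d : K) - 1)) * X 0 * X 1 ^ (d - 2)), 0, 0;
    0, -(C (d : K) * X 1 ^ (d - 1)), C (d : K) * X 0 ^ (d - 1), 0;
    0, C (d : K) * X 1 ^ (d - 1), -(C (d : K) * X 0 ^ (d - 1)), 0;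
    0, 0, -(C ((d : K) * ((d : K) - 1)) * X 0 ^ (d - 2) * X 1),
      C ((d : K) * ((d : K) - 1)) * X 0 ^ (d - 1)]

/-- The space of 4-tuples of degree-`e` homogeneous polynomials killed by the
matrix `A = tangencyMatrix K d`. -/
noncomputable def tangencySolSpace (K : Type*) [Field K] (d e : ℕ) :
    Submodule K (Fin 4 → MvPolynomial (Fin 2) K) :=
  (⨅ i : Fin 4,
      Submodule.comap (LinearMap.proj i) (homogeneousSubmodule (Fin 2) K e)) ⊓
    ⨅ i : Fin 4, LinearMap.ker
      (∑ j : Fin 4, (LinearMap.mulLeft K (tangencyMatrix K d i j)).comp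
        (LinearMap.proj j))

namespace Stmt14Aux

set_option linter.unusedSectionVars false

variable {K : Type*} [Field K] [CharZero K]

lemma cA_ne {m : ℕ} : ((m : MvPolynomial (Fin 2) K) + C 2) ≠ 0 := by
  have h : ((m : MvPolynomial (Fin 2) K) + C 2) = C ((m : K) + 2) := by
    simp [map_add, map_natCast]
  rw [h, ne_eq, MvPolynomial.C_eq_zero]
  intro hc
  have : ((m + 2 : ℕ) : K) = 0 := by push_cast; exact hc
  exact absurd (Nat.cast_eq_zero.mp this) (by omega)

lemma cB_ne {m : ℕ} : ((m : MvPolynomial (Fin 2) K) + C 2 - 1) ≠ 0 := by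
  have h : ((m : MvPolynomial (Fin 2) K) + C 2 - 1) = C ((m : K) + 1) := by
    rw [show (C 2 : MvPolynomial (Fin 2) K) = 2 from map_ofNat _ 2,
      map_add, map_natCast, map_one]
    ring
  rw [h, ne_eq, MvPolynomial.C_eq_zero]
  intro hc
  have : ((m + 1 : ℕ) : K) = 0 := by push_cast; exact hc
  exact absurd (Nat.cast_eq_zero.mp this) (by omega)

lemma rows {m : ℕ} (f : Fin 4 → MvPolynomial (Fin 2) K)
    (hAf : (tangencyMatrix K (m + 2)).mulVec f = 0) :
    X 1 * f 0 = X 0 * f 1 ∧ X 1 ^ (m + 1) * f 1 = X 0 ^ (m + 1) * f 2 ∧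
      X 1 * f 2 = X 0 * f 3 := by
  have h0 := congrFun hAf 0
  have h1 := congrFun hAf 1
  have h3 := congrFun hAf 3
  simp [tangencyMatrix, Matrix.mulVec, dotProduct, Fin.sum_univ_four] at h0 h1 h3
  refine ⟨?_, ?_, ?_⟩
  · have h : (((m : MvPolynomial (Fin 2) K) + C 2) * ((m : MvPolynomial (Fin 2) K) + C 2 - 1)
        * X 1 ^ m) * (X 1 * f 0 - X 0 * f 1) = 0 := by
      linear_combination h0
    exact sub_eq_zero.mp ((mul_eq_zero.mp h).resolve_left
      (mul_ne_zero (mul_ne_zero cA_ne cB_ne) (pow_ne_zero _ (X_ne_zero _))))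
  · have h : ((m : MvPolynomial (Fin 2) K) + C 2)
        * (X 1 ^ (m + 1) * f 1 - X 0 ^ (m + 1) * f 2) = 0 := by
      linear_combination -h1
    exact sub_eq_zero.mp ((mul_eq_zero.mp h).resolve_left cA_ne)
  · have h : (((m : MvPolynomial (Fin 2) K) + C 2) * ((m : MvPolynomial (Fin 2) K) + C 2 - 1)
        * X 0 ^ m) * (X 1 * f 2 - X 0 * f 3) = 0 := by
      linear_combination -h3
    exact sub_eq_zero.mp ((mul_eq_zero.mp h).resolve_left
      (mul_ne_zero (mul_ne_zero cA_ne cB_ne) (pow_ne_zero _ (X_ne_zero _))))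

lemma prime_X0 : Prime (X 0 : MvPolynomial (Fin 2) K) := by
  refine (MulEquiv.prime_iff (MvPolynomial.finSuccEquiv K 1).toMulEquiv).mp ?_
  have h : (MvPolynomial.finSuccEquiv K 1).toMulEquiv (X 0) = Polynomial.X := by
    simp [MvPolynomial.finSuccEquiv_X_zero]
  rw [h]
  exact Polynomial.prime_X

lemma not_X0_dvd_X1 : ¬ (X 0 : MvPolynomial (Fin 2) K) ∣ X 1 := by
  rintro ⟨q, hq⟩
  have := congrArg (eval (fun i : Fin 2 => if i = 0 then 0 else 1)) hq
  simp at this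

lemma key {m : ℕ} {f : Fin 4 → MvPolynomial (Fin 2) K}
    (r1 : X 1 * f 0 = X 0 * f 1) (r2 : X 1 ^ (m + 1) * f 1 = X 0 ^ (m + 1) * f 2)
    (r3 : X 1 * f 2 = X 0 * f 3) :
    X 1 ^ (m + 3) * f 0 = X 0 ^ (m + 3) * f 3 := by
  linear_combination (X 1 : MvPolynomial (Fin 2) K) ^ (m + 2) * r1
    + X 0 * X 1 * r2 + X 0 ^ (m + 2) * r3

lemma dvd_f0 {m : ℕ} {f : Fin 4 → MvPolynomial (Fin 2) K}
    (hk : X 1 ^ (m + 3) * f 0 = X 0 ^ (m + 3) * f 3) :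
    (X 0 : MvPolynomial (Fin 2) K) ^ (m + 3) ∣ f 0 := by
  have hnd : ¬ (X 0 : MvPolynomial (Fin 2) K) ∣ X 1 ^ (m + 3) :=
    fun h => not_X0_dvd_X1 (prime_X0.dvd_of_dvd_pow h)
  exact prime_X0.pow_dvd_of_dvd_mul_left (m + 3) hnd ⟨f 3, hk⟩

lemma deg2 (u : Fin 2 →₀ ℕ) : u.degree = u 0 + u 1 := by
  rw [Finsupp.degree_apply, Finset.sum_subset (Finset.subset_univ _), Fin.sum_univ_two]
  intro i _ hi
  simpa using Finsupp.notMem_support_iff.mp hi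

lemma isHomog_iff {φ : MvPolynomial (Fin 2) K} {n : ℕ} :
    φ.IsHomogeneous n ↔ ∀ u : Fin 2 →₀ ℕ, coeff u φ ≠ 0 → u.degree = n := by
  constructor
  · intro h u hu
    by_contra hne
    exact hu (h.coeff_eq_zero hne)
  · intro h u hu
    rw [show (Finsupp.weight 1 : (Fin 2 →₀ ℕ) →+ ℕ) = Finsupp.degree from
      Finsupp.degree_eq_weight_one.symm]
    exact h u hu

lemma isHomog_of_mul {n k : ℕ} {g : MvPolynomial (Fin 2) K}
    (h : (X 0 ^ k * g).IsHomogeneous (k + n)) : g.IsHomogeneous n := by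
  rw [isHomog_iff] at h ⊢
  intro u hu
  have hc : coeff (Finsupp.single 0 k + u) (X 0 ^ k * g) = coeff u g := by
    rw [X_pow_eq_monomial, coeff_monomial_mul, one_mul]
  have := h _ (by rw [hc]; exact hu)
  rw [deg2] at this ⊢
  simp [Finsupp.single_apply] at this
  omega

/-- The set of exponents of bidegree `n` is in bijection with `Fin (n+1)`. -/
noncomputable def degEquiv (n : ℕ) : {u : Fin 2 →₀ ℕ // u.degree = n} ≃ Fin (n + 1) where
  toFun u := ⟨u.1 0, by
    have h1 := Finsupp.le_degree 0 u.1
    have h2 : u.1.degree = n := u.2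
    omega⟩
  invFun k := ⟨Finsupp.single 0 k.1 + Finsupp.single 1 (n - k.1), by
    rw [deg2]
    have hk : k.1 ≤ n := by omega
    simp [Finsupp.single_apply]
    omega⟩
  left_inv u := by
    have h2 : u.1.degree = n := u.2
    rw [deg2] at h2
    apply Subtype.ext
    ext i
    fin_cases i <;> simp [Finsupp.single_apply] <;> omega
  right_inv k := by
    apply Fin.ext
    simp [Finsupp.single_apply]

lemma finrank_homog (n : ℕ) :
    Module.finrank K (homogeneousSubmodule (Fin 2) K n) = n + 1 := by
  classical
  set S : Set (Fin 2 →₀ ℕ) := {u | u.degree = n} with hS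
  have hSub : S ≃ Fin (n + 1) := degEquiv n
  haveI : Fintype S := Fintype.ofEquiv _ hSub.symm
  have e1 : (homogeneousSubmodule (Fin 2) K n) ≃ₗ[K] AddMonoidAlgebra.supported K K S :=
    LinearEquiv.ofEq _ _ (homogeneousSubmodule_eq_finsupp_supported (Fin 2) K n)
  have e2 : AddMonoidAlgebra.supported K K S ≃ₗ[K] (S →₀ K) :=
    AddMonoidAlgebra.supportedEquivFinsupp S
  rw [e1.finrank_eq, e2.finrank_eq, Module.finrank_finsupp_self, Fintype.card_congr hSub,
    Fintype.card_fin]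

lemma mem_solspace {d e : ℕ} (f : Fin 4 → MvPolynomial (Fin 2) K) :
    f ∈ tangencySolSpace K d e ↔
      (∀ i, (f i).IsHomogeneous e) ∧ (tangencyMatrix K d).mulVec f = 0 := by
  simp only [tangencySolSpace, Submodule.mem_inf, Submodule.mem_iInf, Submodule.mem_comap,
    LinearMap.mem_ker, LinearMap.sum_apply, LinearMap.coe_comp, Function.comp_apply,
    LinearMap.proj_apply, LinearMap.mulLeft_apply, mem_homogeneousSubmodule]
  rw [funext_iff]
  simp [Matrix.mulVec, dotProduct]

/-- The linear map sending `g` to `(s^{d+1} g, s^d t g, s t^d g, t^{d+1} g)`. -/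
noncomputable def psi (K : Type*) [Field K] (d : ℕ) :
    MvPolynomial (Fin 2) K →ₗ[K] (Fin 4 → MvPolynomial (Fin 2) K) :=
  LinearMap.pi fun i => LinearMap.mulLeft K
    (![X 0 ^ (d + 1), X 0 ^ d * X 1, X 0 * X 1 ^ d, X 1 ^ (d + 1)] i)

lemma psi_apply (d : ℕ) (g : MvPolynomial (Fin 2) K) (i : Fin 4) :
    psi K d g i = ![X 0 ^ (d + 1), X 0 ^ d * X 1, X 0 * X 1 ^ d, X 1 ^ (d + 1)] i * g := rfl

lemma psi_inj (d : ℕ) : Function.Injective (psi K d) := by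
  intro a b hab
  have h := congrFun hab 0
  simp only [psi_apply, Matrix.cons_val_zero] at h
  exact mul_left_cancel₀ (pow_ne_zero _ (X_ne_zero _)) h

lemma solspace_eq {m e : ℕ} (he : m + 3 ≤ e) :
    tangencySolSpace K (m + 2) e
      = Submodule.map (psi K (m + 2)) (homogeneousSubmodule (Fin 2) K (e - (m + 3))) := by
  apply le_antisymm
  · intro x hx
    rw [mem_solspace] at hx
    obtain ⟨hhom, hAf⟩ := hx
    obtain ⟨r1, r2, r3⟩ := rows x hAf
    obtain ⟨g, hg0⟩ := dvd_f0 (key r1 r2 r3)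
    have hx1 : x 1 = X 0 ^ (m + 2) * X 1 * g := by
      apply mul_left_cancel₀ (X_ne_zero (R := K) (σ := Fin 2) 0)
      linear_combination (X 1 : MvPolynomial (Fin 2) K) * hg0 - r1
    have hx2 : x 2 = X 0 * X 1 ^ (m + 2) * g := by
      apply mul_left_cancel₀ (pow_ne_zero (m + 1) (X_ne_zero (R := K) (σ := Fin 2) 0))
      linear_combination (X 1 : MvPolynomial (Fin 2) K) ^ (m + 1) * hx1 - r2
    have hx3 : x 3 = X 1 ^ (m + 3) * g := by
      apply mul_left_cancel₀ (X_ne_zero (R := K) (σ := Fin 2) 0)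
      linear_combination (X 1 : MvPolynomial (Fin 2) K) * hx2 - r3
    refine ⟨g, ?_, ?_⟩
    · refine isHomog_of_mul (k := m + 3) ?_
      rw [show (m + 3) + (e - (m + 3)) = e from by omega, ← hg0]
      exact hhom 0
    · have H0 : psi K (m + 2) g 0 = x 0 := by
        rw [show psi K (m + 2) g 0 = X 0 ^ (m + 3) * g from rfl]
        exact hg0.symm
      have H1 : psi K (m + 2) g 1 = x 1 := by
        rw [show psi K (m + 2) g 1 = X 0 ^ (m + 2) * X 1 * g from rfl]
        exact hx1.symm
      have H2 : psi K (m + 2) g 2 = x 2 := by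
        rw [show psi K (m + 2) g 2 = X 0 * X 1 ^ (m + 2) * g from rfl]
        exact hx2.symm
      have H3 : psi K (m + 2) g 3 = x 3 := by
        rw [show psi K (m + 2) g 3 = X 1 ^ (m + 3) * g from rfl]
        exact hx3.symm
      funext i
      fin_cases i
      · exact H0
      · exact H1
      · exact H2
      · exact H3
  · rintro x ⟨g, hg, rfl⟩
    rw [mem_solspace]
    replace hg : g.IsHomogeneous (e - (m + 3)) := hg
    constructor
    · have H0 : (psi K (m + 2) g 0).IsHomogeneous e := by
        rw [show psi K (m + 2) g 0 = X 0 ^ (m + 3) * g from rfl]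
        exact (show (m + 3) + (e - (m + 3)) = e from by omega) ▸
          ((isHomogeneous_X_pow 0 (m + 3)).mul hg)
      have H1 : (psi K (m + 2) g 1).IsHomogeneous e := by
        rw [show psi K (m + 2) g 1 = X 0 ^ (m + 2) * X 1 * g from rfl]
        exact (show ((m + 2) + 1) + (e - (m + 3)) = e from by omega) ▸
          (((isHomogeneous_X_pow 0 (m + 2)).mul (isHomogeneous_X K 1)).mul hg)
      have H2 : (psi K (m + 2) g 2).IsHomogeneous e := by
        rw [show psi K (m + 2) g 2 = X 0 * X 1 ^ (m + 2) * g from rfl]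
        exact (show (1 + (m + 2)) + (e - (m + 3)) = e from by omega) ▸
          (((isHomogeneous_X K 0).mul (isHomogeneous_X_pow 1 (m + 2))).mul hg)
      have H3 : (psi K (m + 2) g 3).IsHomogeneous e := by
        rw [show psi K (m + 2) g 3 = X 1 ^ (m + 3) * g from rfl]
        exact (show (m + 3) + (e - (m + 3)) = e from by omega) ▸
          ((isHomogeneous_X_pow 1 (m + 3)).mul hg)
      intro i
      fin_cases i
      · exact H0
      · exact H1
      · exact H2
      · exact H3
    · have H : ∀ j : Fin 4,
          (tangencyMatrix K (m + 2)).mulVec (psi K (m + 2) g) j = 0 := by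
        intro j
        fin_cases j <;>
          · simp [tangencyMatrix, Matrix.mulVec, dotProduct, Fin.sum_univ_four,
              psi_apply]
            ring
      funext i
      exact H i

end Stmt14Aux

/-- Fiber computation in the proof of Theorem 5.1 (higherDegreeRelations): if
`A (f₀,f₁,f₂,f₃)ᵀ = 0` with the `fᵢ` homogeneous of degree `e`, then `s^{d+1} ∣ f₀`,
`f₀` determines `f₁, f₂, f₃` uniquely, and the solution space has dimension `e - d`. -/
theorem stmt_14 {K : Type*} [Field K] [CharZero K] (d e : ℕ) (hd : 2 ≤ d)
    (he : d + 1 ≤ e)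
    (f : Fin 4 → MvPolynomial (Fin 2) K)
    (hf : ∀ i, (f i).IsHomogeneous e)
    (hAf : (tangencyMatrix K d).mulVec f = 0) :
    X 0 ^ (d + 1) ∣ f 0 ∧
      (∀ g : Fin 4 → MvPolynomial (Fin 2) K, (∀ i, (g i).IsHomogeneous e) →
        (tangencyMatrix K d).mulVec g = 0 → g 0 = f 0 → g = f) ∧
      Module.finrank K (tangencySolSpace K d e) = e - d := by
  obtain ⟨m, rfl⟩ : ∃ m, d = m + 2 := ⟨d - 2, by omega⟩
  obtain ⟨r1, r2, r3⟩ := Stmt14Aux.rows f hAf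
  refine ⟨Stmt14Aux.dvd_f0 (Stmt14Aux.key r1 r2 r3), ?_, ?_⟩
  · intro g hg hAg hg0
    obtain ⟨s1, s2, s3⟩ := Stmt14Aux.rows g hAg
    have h1 : g 1 = f 1 := mul_left_cancel₀ (X_ne_zero 0) (by rw [← s1, hg0, r1])
    have h2 : g 2 = f 2 :=
      mul_left_cancel₀ (pow_ne_zero (m + 1) (X_ne_zero 0)) (by rw [← s2, h1, r2])
    have h3 : g 3 = f 3 := mul_left_cancel₀ (X_ne_zero 0) (by rw [← s3, h2, r3])
    funext i
    fin_cases i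
    · exact hg0
    · exact h1
    · exact h2
    · exact h3
  · rw [Stmt14Aux.solspace_eq (by omega : m + 3 ≤ e),
      ← (Submodule.equivMapOfInjective _ (Stmt14Aux.psi_inj (m + 2))
        (homogeneousSubmodule (Fin 2) K (e - (m + 3)))).finrank_eq,
      Stmt14Aux.finrank_homog]
    omega
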